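/- arXiv:math-ph/9910001 — 4 statements merged into one kernel-verified Lean document; each statement's English description precedes it below -/
import Mathlib

section
/- Let g(x) = arctan( x·(1+x²)^{−1/4} ), let η ∈ (0,1), and define f : ℝ → ℂ by f(x) = ( 1 − iη·g'(x) )^{−1}. Then for every x ∈ ℝ: Re( f(x)² ) ≥ (1/4)·( 1 − η²·(1+x²)^{1/2} / ( x² + (1+x²)^{1/2} )² ). -/
open scoped Real

private lemma quarter_bound (a b : ℝ) (ha : 0 ≤ a) (hab : a ≤ b) (hb1 : b ≤ 1) :
    (1 / 4 : ℝ) * (1 - b) ≤ (1 - a) / (1 + a) ^ 2 := by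
  have h1 : (0:ℝ) ≤ 1 - b := by linarith
  have ha1 : a ≤ 1 := le_trans hab hb1
  have h2 : (1 + a) ^ 2 ≤ 4 := by nlinarith
  rw [le_div_iff₀ (by positivity)]
  nlinarith [mul_le_mul_of_nonneg_right h2 h1,
    mul_nonneg (sub_nonneg.2 hab) (sq_nonneg (1 + a))]

/-- Estimate (3.10): real part of `f² = (1 − iη g')^{−2}` where
`g(x) = arctan(x·(1+x²)^{−1/4})` is the complex distortion function. -/
theorem re_f_squared_lower_bound (η : ℝ) (hη : η ∈ Set.Ioo (0 : ℝ) 1) (x : ℝ) :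
    (1 / 4) * (1 - η ^ 2 * (1 + x ^ 2) ^ ((1 : ℝ) / 2)
        / (x ^ 2 + (1 + x ^ 2) ^ ((1 : ℝ) / 2)) ^ 2)
      ≤ ((((1 : ℂ) - Complex.I * (η : ℂ) *
          ((deriv (fun y : ℝ => Real.arctan (y * (1 + y ^ 2) ^ (-(1 / 4 : ℝ)))) x : ℝ) : ℂ))⁻¹
            ^ 2).re) := by
  obtain ⟨hη0, hη1⟩ := hη
  have hp : (0:ℝ) < 1 + x ^ 2 := by positivity
  obtain ⟨r, hr_def⟩ : ∃ r : ℝ, r = (1 + x ^ 2) ^ ((1:ℝ)/4) := ⟨_, rfl⟩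
  have hr0 : 0 < r := hr_def ▸ Real.rpow_pos_of_pos hp _
  have hr1 : 1 ≤ r := hr_def ▸ Real.one_le_rpow (by nlinarith [sq_nonneg x]) (by norm_num)
  have hr4 : r ^ 4 = 1 + x ^ 2 := by
    rw [hr_def, ← Real.rpow_natCast ((1 + x ^ 2) ^ ((1:ℝ)/4)) 4, ← Real.rpow_mul hp.le]
    norm_num
  have hS : (1 + x ^ 2) ^ ((1:ℝ)/2) = r ^ 2 := by
    rw [hr_def, ← Real.rpow_natCast ((1 + x ^ 2) ^ ((1:ℝ)/4)) 2, ← Real.rpow_mul hp.le]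
    norm_num
  have hm1 : (1 + x ^ 2) ^ (-(1/4 : ℝ)) = r⁻¹ := by
    rw [Real.rpow_neg hp.le, hr_def]
  have hm5 : (1 + x ^ 2) ^ (-(1/4 : ℝ) - 1) = (r ^ 5)⁻¹ := by
    have h54 : (-(1/4 : ℝ) - 1) = -(5/4 : ℝ) := by norm_num
    rw [h54, Real.rpow_neg hp.le]
    congr 1
    rw [hr_def, ← Real.rpow_natCast ((1 + x ^ 2) ^ ((1:ℝ)/4)) 5, ← Real.rpow_mul hp.le]
    norm_num
  obtain ⟨D, hD_def⟩ : ∃ D : ℝ,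
      D = (1 / (1 + (x * r⁻¹) ^ 2)) * (1 * r⁻¹ + x * ((-(1/4 : ℝ)) * (r ^ 5)⁻¹ * (2 * x))) :=
    ⟨_, rfl⟩
  have hderiv : deriv (fun y : ℝ => Real.arctan (y * (1 + y ^ 2) ^ (-(1 / 4 : ℝ)))) x = D := by
    have hbase : HasDerivAt (fun y : ℝ => 1 + y ^ 2) (2 * x) x := by
      simpa using (hasDerivAt_pow 2 x).const_add 1
    have h1 : HasDerivAt (fun y : ℝ => (1 + y ^ 2) ^ (-(1 / 4 : ℝ)))
        ((-(1/4 : ℝ)) * (1 + x ^ 2) ^ (-(1 / 4 : ℝ) - 1) * (2 * x)) x :=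
      HasDerivAt.comp (h₂ := fun t : ℝ => t ^ (-(1 / 4 : ℝ))) x (Real.hasDerivAt_rpow_const (Or.inl hp.ne')) hbase
    have hu : HasDerivAt (fun y : ℝ => y * (1 + y ^ 2) ^ (-(1 / 4 : ℝ)))
        (1 * (1 + x ^ 2) ^ (-(1 / 4 : ℝ)) +
          x * ((-(1/4 : ℝ)) * (1 + x ^ 2) ^ (-(1 / 4 : ℝ) - 1) * (2 * x))) x :=
      (hasDerivAt_id x).mul h1
    have harc : HasDerivAt (fun y : ℝ => Real.arctan (y * (1 + y ^ 2) ^ (-(1 / 4 : ℝ))))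
        ((1 / (1 + (x * (1 + x ^ 2) ^ (-(1 / 4 : ℝ))) ^ 2)) *
          (1 * (1 + x ^ 2) ^ (-(1 / 4 : ℝ)) +
            x * ((-(1/4 : ℝ)) * (1 + x ^ 2) ^ (-(1 / 4 : ℝ) - 1) * (2 * x)))) x :=
      HasDerivAt.comp (h₂ := Real.arctan) x (Real.hasDerivAt_arctan (x * (1 + x ^ 2) ^ (-(1 / 4 : ℝ)))) hu
    rw [harc.deriv, hD_def, hm1, hm5]
  have hD_eq : D = (1 + x ^ 2 / 2) / (r ^ 3 * (x ^ 2 + r ^ 2)) := by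
    rw [hD_def]
    have h : (0:ℝ) < r ^ 2 + x ^ 2 := by positivity
    field_simp
    ring_nf
    linear_combination (8*r^2 + 8*x^2) * hr4
  obtain ⟨A, hA_def⟩ : ∃ A : ℝ, A = r ^ 2 / (x ^ 2 + r ^ 2) ^ 2 := ⟨_, rfl⟩
  have hA_le : D ^ 2 ≤ A := by
    rw [hD_eq, hA_def, div_pow, div_le_div_iff₀ (by positivity) (by positivity)]
    have h1 : (1 + x ^ 2 / 2) ^ 2 ≤ (r ^ 4) ^ 2 := by rw [hr4]; nlinarith [sq_nonneg x]
    nlinarith [sq_nonneg (x ^ 2 + r ^ 2), mul_le_mul_of_nonneg_right h1 (sq_nonneg (x ^ 2 + r ^ 2))]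
  have hA0 : 0 ≤ A := by rw [hA_def]; positivity
  have hA1 : A ≤ 1 := by
    rw [hA_def, div_le_one (by positivity)]
    have hr2 : 1 ≤ r ^ 2 := by nlinarith [hr1, hr0]
    nlinarith [mul_nonneg (sub_nonneg.2 hr2) (sq_nonneg r), sq_nonneg x, sq_nonneg (x ^ 2),
      mul_nonneg (sq_nonneg x) (sq_nonneg r)]
  have ht2 : (η * D) ^ 2 ≤ η ^ 2 * A := by
    rw [mul_pow]
    exact mul_le_mul_of_nonneg_left hA_le (by positivity)
  have hη2 : η ^ 2 ≤ 1 := pow_le_one₀ hη0.le hη1.le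
  have hηA1 : η ^ 2 * A ≤ 1 := by
    have h := mul_le_mul_of_nonneg_left hA1 (sq_nonneg η)
    rw [mul_one] at h
    exact h.trans hη2
  have hre : ((((1:ℂ) - Complex.I * (η:ℂ) * ((D:ℝ):ℂ))⁻¹) ^ 2).re
      = (1 - (η * D)^2)/(1 + (η * D)^2)^2 := by
    rw [inv_pow, Complex.inv_re]
    simp [Complex.normSq_apply, sq, Complex.mul_re, Complex.mul_im, Complex.sub_re,
      Complex.sub_im]
    ring
  rw [hderiv, hre, hS]
  have key : (1 / 4 : ℝ) * (1 - η ^ 2 * A) ≤ (1 - (η * D) ^ 2) / (1 + (η * D) ^ 2) ^ 2 :=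
    quarter_bound _ _ (sq_nonneg _) ht2 hηA1
  calc (1 / 4 : ℝ) * (1 - η ^ 2 * (r ^ 2) / (x ^ 2 + r ^ 2) ^ 2)
      = (1 / 4) * (1 - η ^ 2 * A) := by rw [hA_def]; ring
    _ ≤ _ := key
end

section
/- Let g(x) = arctan( x·(1+x²)^{−1/4} ) and for η > 0 define f(x) = ( 1 − iη·g'(x) )^{−1}. Then there exists η₀ ∈ (0,1) such that for every η ∈ (0, η₀] and every x ∈ ℝ: Im( f(x)² ) ≥ η·(1+x²)^{1/4} / ( x² + (1+x²)^{1/2} ). -/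
open scoped Real

lemma aux_im (t : ℝ) : (((1:ℂ) - Complex.I * t)⁻¹ ^ 2).im = 2*t/(1+t^2)^2 := by
  have hns : Complex.normSq ((1:ℂ) - Complex.I * t) = 1 + t ^ 2 := by
    simp [Complex.normSq_apply]; ring
  rw [pow_two, Complex.mul_im, Complex.inv_im, Complex.inv_re, hns]
  have h0 : (0:ℝ) < 1 + t ^ 2 := by positivity
  simp only [Complex.sub_im, Complex.sub_re, Complex.one_re, Complex.one_im,
    Complex.mul_im, Complex.mul_re, Complex.I_re, Complex.I_im, Complex.ofReal_re,
    Complex.ofReal_im]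
  field_simp
  ring

set_option maxHeartbeats 1600000 in
/-- Estimate (3.11): for `η` small enough, the imaginary part of
`f² = (1 − iη g')^{−2}` dominates `η·w(x)` with weight
`w(x) = (1+x²)^{1/4}/(x²+(1+x²)^{1/2})`, where `g(x) = arctan(x·(1+x²)^{−1/4})`. -/
theorem im_f_squared_lower_bound :
    ∃ η₀ ∈ Set.Ioo (0 : ℝ) 1, ∀ η : ℝ, 0 < η → η ≤ η₀ → ∀ x : ℝ,
      η * (1 + x ^ 2) ^ ((1 : ℝ) / 4) / (x ^ 2 + (1 + x ^ 2) ^ ((1 : ℝ) / 2))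
        ≤ ((((1 : ℂ) - Complex.I * (η : ℂ) *
            ((deriv (fun y : ℝ => Real.arctan (y * (1 + y ^ 2) ^ (-(1 / 4 : ℝ)))) x : ℝ) : ℂ))⁻¹
              ^ 2).im) := by
  refine ⟨1/2, by norm_num, fun η hη hη2 x => ?_⟩
  have hs0 : (0:ℝ) < 1 + x ^ 2 := by positivity
  set c : ℝ := (1 + x ^ 2) ^ ((1:ℝ)/4) with hc
  have hc1 : (1:ℝ) ≤ c := Real.one_le_rpow (by nlinarith) (by norm_num)
  have hc0 : (0:ℝ) < c := lt_of_lt_of_le one_pos hc1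
  have hc4 : c ^ (4:ℕ) = 1 + x ^ 2 := by
    rw [hc, ← Real.rpow_natCast ((1 + x ^ 2) ^ ((1:ℝ)/4)) 4, ← Real.rpow_mul hs0.le]
    norm_num
  have hhalf : (1 + x ^ 2) ^ ((1:ℝ)/2) = c ^ (2:ℕ) := by
    rw [hc, ← Real.rpow_natCast ((1 + x ^ 2) ^ ((1:ℝ)/4)) 2, ← Real.rpow_mul hs0.le]
    norm_num
  have hder : HasDerivAt (fun y : ℝ => Real.arctan (y * (1 + y ^ 2) ^ (-(1 / 4 : ℝ))))
      ((1 * (1 + x ^ 2) ^ (-(1/4:ℝ)) + x * ((2*x) * (-(1/4:ℝ)) * (1 + x ^ 2) ^ (-(1/4:ℝ) - 1)))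
        / (1 + (x * (1 + x ^ 2) ^ (-(1/4:ℝ))) ^ 2)) x := by
    have h0 : HasDerivAt (fun y : ℝ => 1 + y ^ 2) (2 * x) x := by
      simpa using (hasDerivAt_pow 2 x).const_add 1
    have h1 := h0.rpow_const (p := -(1/4:ℝ)) (Or.inl (by positivity))
    have h2 := (hasDerivAt_id x).mul h1
    simpa [div_eq_inv_mul, mul_comm, mul_assoc, mul_left_comm] using h2.arctan
  set P : ℝ := x ^ 2 + c ^ 2 with hP
  have hP0 : (0:ℝ) < P := by positivity
  set a : ℝ := (1 + x ^ 2 / 2) / (c ^ 3 * P) with ha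
  have ha0 : (0:ℝ) < a := by positivity
  have haeq : deriv (fun y : ℝ => Real.arctan (y * (1 + y ^ 2) ^ (-(1 / 4 : ℝ)))) x = a := by
    rw [hder.deriv]
    have e1 : (1 + x ^ 2) ^ (-(1/4:ℝ)) = c⁻¹ := by
      rw [hc, ← Real.rpow_neg_one ((1 + x ^ 2) ^ ((1:ℝ)/4)), ← Real.rpow_mul hs0.le]; norm_num
    have e2 : (1 + x ^ 2) ^ (-(1/4:ℝ) - 1) = (c ^ (5:ℕ))⁻¹ := by
      rw [hc, ← Real.rpow_natCast ((1 + x ^ 2) ^ ((1:ℝ)/4)) 5, ← Real.rpow_mul hs0.le,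
        ← Real.rpow_neg hs0.le]
      norm_num
    rw [e1, e2, ha, hP]
    field_simp
    linear_combination (8*(c^2+x^2)) * hc4
  rw [haeq]
  clear_value c P a
  have hcast : ((1 : ℂ) - Complex.I * (η : ℂ) * (a : ℂ)) = 1 - Complex.I * ((η * a : ℝ) : ℂ) := by
    push_cast; ring
  rw [hcast, aux_im, hhalf]
  -- bound on (η a)
  have hale : a ≤ 1 / c ^ 3 := by
    rw [ha, div_le_div_iff₀ (by positivity) (by positivity)]
    have h1 : (1 + x ^ 2 / 2) ≤ x ^ 2 + c ^ 2 := by nlinarith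
    have := mul_le_mul_of_nonneg_left h1 (pow_pos hc0 3).le
    rw [hP]; nlinarith [this]
  have hta : η * a ≤ 1 / (2 * c ^ 3) := by
    have := mul_le_mul hη2 hale ha0.le (by norm_num)
    calc η * a ≤ (1/2) * (1 / c ^ 3) := this
      _ = 1 / (2 * c ^ 3) := by ring
  have htsq : (η * a) ^ 2 ≤ 1 / (4 * c ^ 4) := by
    have h1 : (η * a) ^ 2 ≤ (1 / (2 * c ^ 3)) ^ 2 :=
      pow_le_pow_left₀ (by positivity) hta 2
    have h2 : (1 / (2 * c ^ 3)) ^ 2 ≤ 1 / (4 * c ^ 4) := by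
      rw [div_pow, one_pow, div_le_div_iff₀ (by positivity) (by positivity)]
      nlinarith [mul_nonneg (pow_pos hc0 4).le (by nlinarith : (0:ℝ) ≤ c ^ 2 - 1)]
    linarith
  have hden : (1 + (η * a) ^ 2) ^ 2 ≤ 1 + 1 / c ^ 4 := by
    have hv0 : (0:ℝ) < 1 / c ^ 4 := by positivity
    have hv1 : 1 / c ^ 4 ≤ 1 := by
      rw [div_le_one (by positivity)]; nlinarith [hc1]
    set u : ℝ := (η * a) ^ 2 with hu
    have hu0 : (0:ℝ) ≤ u := sq_nonneg _
    clear_value u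
    have hu4 : u ≤ (1 / c ^ 4) / 4 := by
      have e : (1:ℝ) / (4 * c ^ 4) = (1 / c ^ 4) / 4 := by ring
      linarith [htsq]
    have huv : u ≤ 1/4 := le_trans hu4 (by linarith)
    have husq : u ^ 2 ≤ u / 4 := by
      nlinarith [mul_nonneg hu0 (by linarith : (0:ℝ) ≤ 1/4 - u)]
    have expand : (1 + u) ^ 2 = 1 + 2*u + u^2 := by ring
    linarith [expand, husq, hu4, hv1]
  have hstep : η * c / (x ^ 2 + c ^ 2) = 2 * (η * a) / (1 + 1 / c ^ 4) := by
    rw [ha, hP]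
    field_simp
    linear_combination hc4
  calc η * c / (x ^ 2 + c ^ 2) = 2 * (η * a) / (1 + 1 / c ^ 4) := hstep
    _ ≤ 2 * (η * a) / (1 + (η * a) ^ 2) ^ 2 := by
        apply div_le_div_of_nonneg_left (by positivity) (by positivity) hden
end

section
/- Let g(x) = arctan( x·(1+x²)^{−1/4} ) and for η > 0 define f(x) = ( 1 − iη·g'(x) )^{−1}. Then there exists η₀ ∈ (0,1) such that for every η ∈ (0, η₀], every δ ∈ [0, π/2], and every x ∈ ℝ: Re( e^{−i(π/2 − δ)}·f(x)² ) ≥ η·(cos δ)·(1+x²)^{1/4} / ( x² + (1+x²)^{1/2} ). -/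
open scoped Real

lemma re_formula (s c A : ℝ) :
    (((s : ℂ) - (c : ℂ) * Complex.I) * (((1:ℂ) - Complex.I * (A:ℂ))⁻¹) ^ 2).re
      = (s * (1 - A^2) + c * (2*A)) / (1 + A^2)^2 := by
  have h2 : ((1:ℂ) - Complex.I * (A:ℂ)) ^ 2 = Complex.mk (1 - A^2) (-(2*A)) := by
    apply Complex.ext <;>
      simp [pow_two, Complex.mul_re, Complex.mul_im, Complex.sub_re, Complex.sub_im] <;> ring
  have hns : Complex.normSq (Complex.mk (1 - A^2) (-(2*A))) = (1 + A^2)^2 := by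
    simp [Complex.normSq_mk]; ring
  rw [inv_pow, h2, Complex.mul_re, Complex.inv_re, Complex.inv_im, hns]
  simp [Complex.sub_re, Complex.sub_im, Complex.mul_re, Complex.mul_im]
  ring

lemma exp_formula (δ : ℝ) :
    Complex.exp (-(Complex.I * ((π : ℂ) / 2 - (δ : ℂ)))) =
      (Real.sin δ : ℂ) - (Real.cos δ : ℂ) * Complex.I := by
  have h : -(Complex.I * ((π : ℂ) / 2 - (δ : ℂ))) = ((δ - π/2 : ℝ) : ℂ) * Complex.I := by
    push_cast; ring
  rw [h, Complex.exp_mul_I, ← Complex.ofReal_cos, ← Complex.ofReal_sin,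
    show δ - π/2 = -(π/2 - δ) by ring, Real.cos_neg, Real.sin_neg,
    Real.cos_pi_div_two_sub, Real.sin_pi_div_two_sub]
  push_cast; ring

lemma deriv_g (x : ℝ) :
    deriv (fun y : ℝ => Real.arctan (y * (1 + y ^ 2) ^ (-(1 / 4 : ℝ)))) x
    = (1/(1 + (x * (1+x^2) ^ (-(1/4:ℝ)))^2)) *
      (1 * (1+x^2)^(-(1/4:ℝ)) + x * (-(1/4) * (1+x^2)^(-(1/4:ℝ)-1) * (2*x))) := by
  have ht0 : (0:ℝ) < 1 + x^2 := by positivity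
  have h1 : HasDerivAt (fun y : ℝ => 1 + y ^ 2) (2*x) x := by
    simpa using ((hasDerivAt_pow 2 x).const_add 1)
  have h2 : HasDerivAt (fun y : ℝ => (1 + y ^ 2) ^ (-(1/4:ℝ)))
      (2*x * (-(1/4:ℝ)) * (1+x^2)^(-(1/4:ℝ)-1)) x :=
    h1.rpow_const (Or.inl (ne_of_gt ht0))
  have h3 : HasDerivAt (fun y : ℝ => y * (1 + y ^ 2) ^ (-(1/4:ℝ)))
      (1 * (1+x^2)^(-(1/4:ℝ)) + x * (-(1/4) * (1+x^2)^(-(1/4:ℝ)-1) * (2*x))) x := by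
    have := (hasDerivAt_id x).fun_mul h2
    exact this.congr_deriv (by simp only [id_eq, one_mul]; ring)
  have h4 := (Real.hasDerivAt_arctan (x * (1+x^2) ^ (-(1/4:ℝ)))).comp x h3
  exact h4.deriv

set_option maxHeartbeats 1000000 in
/-- Estimate (3.12): for `η` small enough and `δ ∈ [0, π/2]`, the rotated weight
`Re(e^{−i(π/2−δ)}f²)` of the kinetic term of the distorted operator dominates
`η·cos δ·w(x)`, where `f = (1 − iη g')^{−1}`, `g(x) = arctan(x·(1+x²)^{−1/4})` and
`w(x) = (1+x²)^{1/4}/(x²+(1+x²)^{1/2})`. -/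
theorem rotated_f_squared_lower_bound :
    ∃ η₀ ∈ Set.Ioo (0 : ℝ) 1, ∀ η : ℝ, 0 < η → η ≤ η₀ →
      ∀ δ : ℝ, δ ∈ Set.Icc (0 : ℝ) (π / 2) → ∀ x : ℝ,
        η * Real.cos δ * ((1 + x ^ 2) ^ ((1 : ℝ) / 4)
            / (x ^ 2 + (1 + x ^ 2) ^ ((1 : ℝ) / 2)))
          ≤ (Complex.exp (-(Complex.I * ((π : ℂ) / 2 - (δ : ℂ)))) *
              (((1 : ℂ) - Complex.I * (η : ℂ) *
                ((deriv (fun y : ℝ =>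
                    Real.arctan (y * (1 + y ^ 2) ^ (-(1 / 4 : ℝ)))) x : ℝ) : ℂ))⁻¹
                  ^ 2)).re := by
  refine ⟨1/2, ⟨by norm_num, by norm_num⟩, ?_⟩
  intro η hη hη2 δ hδ x
  obtain ⟨hδ0, hδ1⟩ := hδ
  have hsin : 0 ≤ Real.sin δ := Real.sin_nonneg_of_nonneg_of_le_pi hδ0 (by linarith [Real.pi_pos])
  have hcos : 0 ≤ Real.cos δ := Real.cos_nonneg_of_mem_Icc ⟨by linarith, hδ1⟩
  have ht0 : (0:ℝ) < 1 + x^2 := by positivity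
  set q : ℝ := (1 + x ^ 2) ^ ((1:ℝ)/4) with hqdef
  have hq0 : 0 < q := Real.rpow_pos_of_pos ht0 _
  have hq1 : 1 ≤ q := Real.one_le_rpow (by nlinarith) (by norm_num)
  have hq4 : q ^ 4 = 1 + x^2 := by
    rw [hqdef, ← Real.rpow_natCast _ 4, ← Real.rpow_mul ht0.le]; norm_num
  have hq2 : (1 + x ^ 2) ^ ((1:ℝ)/2) = q^2 := by
    rw [hqdef, ← Real.rpow_natCast ((1 + x ^ 2) ^ ((1:ℝ)/4)) 2, ← Real.rpow_mul ht0.le]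
    norm_num
  have hqm : (1 + x ^ 2) ^ (-(1/4:ℝ)) = q⁻¹ := by
    rw [Real.rpow_neg ht0.le, hqdef]
  have hqm5 : (1 + x ^ 2) ^ (-(1/4:ℝ)-1) = (q^5)⁻¹ := by
    rw [show (-(1/4:ℝ)-1) = -(5/4:ℝ) by norm_num, Real.rpow_neg ht0.le]
    congr 1
    rw [hqdef, ← Real.rpow_natCast ((1 + x ^ 2) ^ ((1:ℝ)/4)) 5, ← Real.rpow_mul ht0.le]
    norm_num
  clear_value q
  have hP0 : (0:ℝ) < q^2 + x^2 := by positivity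
  set gd : ℝ := (1 + x^2/2)/(q^3*(q^2+x^2)) with hgd
  have hderiv : deriv (fun y : ℝ => Real.arctan (y * (1 + y ^ 2) ^ (-(1 / 4 : ℝ)))) x = gd := by
    rw [deriv_g x, hqm, hqm5, hgd]
    have h1 : (1 + (x * q⁻¹)^2) = (q^2+x^2)/q^2 := by
      field_simp
    have h2 : 1 * q⁻¹ + x * (-(1/4) * (q^5)⁻¹ * (2*x)) = (1 + x^2/2)/q^5 := by
      field_simp
      linear_combination (8 : ℝ) * hq4
    rw [h1, h2]
    field_simp
  rw [hderiv, hq2, exp_formula δ]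
  have hcast : ((1 : ℂ) - Complex.I * (η : ℂ) * (gd : ℂ))
      = ((1:ℂ) - Complex.I * ((η * gd : ℝ) : ℂ)) := by
    push_cast; ring
  rw [hcast, re_formula]
  clear_value gd
  set A : ℝ := η * gd with hA
  clear_value A
  have hgd0 : 0 ≤ gd := by rw [hgd]; positivity
  have hA0 : 0 ≤ A := by rw [hA]; exact mul_nonneg hη.le hgd0
  have hAq : A * q^3 * (q^2+x^2) = η * (1 + x^2/2) := by
    rw [hA, hgd]; field_simp
  have hout : 1 + x^2/2 ≤ q^2 + x^2 := by nlinarith [hq4, hq1]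
  have hA1 : A * q^3 ≤ η := by
    nlinarith [hAq, hP0, mul_le_mul_of_nonneg_left hout hη.le]
  have hAq3 : A * q^3 ≤ 1/2 := le_trans hA1 hη2
  have hB0 : 0 ≤ A * q^3 := mul_nonneg hA0 (pow_nonneg hq0.le 3)
  have hq3 : (1:ℝ) ≤ q^3 := by nlinarith [hq1, hq0]
  have hq21 : (1:ℝ) ≤ q^2 := by nlinarith [hq1, hq0]
  have hA12 : A ≤ 1/2 := by nlinarith [hAq3, mul_nonneg hA0 (sub_nonneg.mpr hq3)]
  have hAsq : A^2 ≤ 1/4 := by nlinarith [hA12, hA0]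
  have h2sq : A^2*q^6 ≤ 1/4 := by
    nlinarith [mul_le_mul hAq3 hAq3 hB0 (by norm_num : (0:ℝ) ≤ 1/2)]
  have h3sq : A^2*q^4 ≤ 1/4 := by
    nlinarith [h2sq, mul_nonneg (mul_nonneg (sq_nonneg A) (pow_nonneg hq0.le 4))
      (sub_nonneg.mpr hq21)]
  have h4sq : A^4*q^4 ≤ 1/16 := by nlinarith [h3sq, hAsq, sq_nonneg A]
  have h2A : 2*A*(x^2+q^2)*q^3 = η*(1+q^4) := by
    linear_combination 2*hAq - η*hq4
  have h5 : η * q * (1+A^2)^2 * q^3 ≤ η * (1 + q^4) := by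
    nlinarith [mul_le_mul_of_nonneg_left h3sq hη.le,
      mul_le_mul_of_nonneg_left h4sq hη.le, hη.le]
  have key : η * q * (1+A^2)^2 ≤ 2*A*(x^2+q^2) := by
    rw [← h2A] at h5
    exact le_of_mul_le_mul_right h5 (pow_pos hq0 3)
  rw [le_div_iff₀ (by positivity)]
  have hterm : η * Real.cos δ * (q/(x^2+q^2)) * (1+A^2)^2 ≤ Real.cos δ * (2*A) := by
    have hxq : (0:ℝ) < x^2+q^2 := by positivity
    calc η * Real.cos δ * (q/(x^2+q^2)) * (1+A^2)^2
        = Real.cos δ * (η*q*(1+A^2)^2) / (x^2+q^2) := by ring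
      _ ≤ Real.cos δ * (2*A*(x^2+q^2)) / (x^2+q^2) := by gcongr
      _ = Real.cos δ * (2*A) := by field_simp
  have h1A : (0:ℝ) ≤ 1 - A^2 := by nlinarith [hA12, hA0]
  nlinarith [hterm, mul_nonneg hsin h1A]
end

section
/- Let k ≥ 1 be an integer, q = (2k−1)/2, and η ∈ (0,1). There exist constants a > 0, c₁ > 0 and c₂ ∈ ℝ, depending only on k and η, such that: for every R > 0 there exist ρ₀ > 0 and n₀ ≥ 1 with the following property. Let 0 < ρ < ρ₀ (in particular ρ^{1/q} < R), set ε = arcsin( ρ^{1/q}/R ) and x₀ = −a·ρ^{−1/(2k−1)}, and let ξ : ℝ → ℂ be any function satisfying: ξ(x) = x − iη·arctan( x·(1+x²)^{−1/4} ) for x ≥ x₀; ξ(x) = x for x ≤ x₀ − η; and on [x₀−η, x₀], Re ξ(x) = x with x ↦ Im ξ(x) monotone. Then the potential V_ρ(x) = e^{i( π/2 − ε(2k−1)/(2k+1) )}·ξ(x)² + iρ·ξ(x)^{2k+1} satisfies Re V_ρ(x) ≥ c₁/R + c₂ for every x ∈ ℝ with |x| ≥ n₀. -/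
open scoped Real


lemma im_pow_le (z : ℂ) : ∀ m : ℕ, |(z ^ (m+1)).im| ≤ (m+1) * ‖z‖ ^ m * |z.im| := by
  intro m
  induction m with
  | zero => simp
  | succ m ih =>
    have h : z ^ (m+2) = z ^ (m+1) * z := by ring
    rw [h, Complex.mul_im]
    have h1 : |(z ^ (m+1)).re * z.im| ≤ ‖z‖ ^ (m+1) * |z.im| := by
      rw [abs_mul]
      gcongr
      calc |(z ^ (m+1)).re| ≤ ‖z ^ (m+1)‖ := Complex.abs_re_le_norm _
        _ = ‖z‖ ^ (m+1) := by rw [norm_pow]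
    have h2 : |(z ^ (m+1)).im * z.re| ≤ ((m+1) * ‖z‖ ^ m * |z.im|) * ‖z‖ := by
      rw [abs_mul]
      exact mul_le_mul ih (Complex.abs_re_le_norm z) (abs_nonneg _) (by positivity)
    have h3 : |(z ^ (m+1)).re * z.im + (z ^ (m+1)).im * z.re|
        ≤ ‖z‖ ^ (m+1) * |z.im| + ((m+1) * ‖z‖ ^ m * |z.im|) * ‖z‖ :=
      (abs_add_le _ _).trans (add_le_add h1 h2)
    refine h3.trans ?_
    push_cast
    ring_nf
    nlinarith [pow_nonneg (norm_nonneg z) m, norm_nonneg z, abs_nonneg z.im]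

lemma one_add_pow_le {δ : ℝ} (hδ : 0 ≤ δ) : ∀ m : ℕ, (m:ℝ)*δ ≤ 1/2 → (1+δ)^m ≤ 1 + 2*m*δ := by
  intro m
  induction m with
  | zero => simp
  | succ m ih =>
    intro h
    push_cast at h ⊢
    have hm : (m:ℝ)*δ ≤ 1/2 := by nlinarith
    have := ih hm
    have h2 : (1+δ)^(m+1) = (1+δ)^m * (1+δ) := by ring
    rw [h2]
    nlinarith [pow_nonneg (by linarith : (0:ℝ) ≤ 1+δ) m]

lemma pos_pow (x v : ℝ) (z : ℂ) (hzre : z.re = x) (hzim : z.im = v)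
    (hv0 : 0 ≤ v) (hv2 : v ≤ 2) :
    ∀ m : ℕ, 8*((m:ℝ)+1)^2 + 2*((m:ℝ)+1) ≤ x →
      (0 ≤ (z ^ (m+1)).im ∧
       (z ^ (m+1)).im ≤ ((m:ℝ)+1)*(x+1)^m*v) ∧
      (x^(m+1) - ((m:ℝ)+1)^2*(x+1)^m*v^2 ≤ (z ^ (m+1)).re ∧
       (z ^ (m+1)).re ≤ (x+1)^(m+1)) := by
  intro m
  induction m with
  | zero =>
    intro _
    simp only [zero_add, pow_one, pow_zero, hzre, hzim, Nat.cast_zero]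
    refine ⟨⟨hv0, by nlinarith⟩, ⟨by nlinarith, by nlinarith⟩⟩
  | succ m ih =>
    intro hx
    push_cast at hx
    have hm1 : 8*((m:ℝ)+1)^2 + 2*((m:ℝ)+1) ≤ x := by nlinarith [sq_nonneg ((m:ℝ)+1)]
    obtain ⟨⟨him0, him⟩, ⟨hre1, hre2⟩⟩ := ih hm1
    have hx1 : (1:ℝ) ≤ x := by nlinarith [sq_nonneg ((m:ℝ)+1)]
    have hx0 : (0:ℝ) < x := by linarith
    have hδ : (0:ℝ) ≤ 1/x := by positivity
    have hmx : (m:ℝ) * (1/x) ≤ 1/2 := by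
      rw [mul_one_div, div_le_div_iff₀ hx0 (by norm_num : (0:ℝ) < 2)]
      nlinarith [sq_nonneg ((m:ℝ)+1)]
    have hpow : (x+1)^m ≤ 2*x^m := by
      have h1 : (x+1)^m = x^m * (1+1/x)^m := by
        rw [← mul_pow]; congr 1; field_simp
      have h2 := one_add_pow_le hδ m hmx
      have h3 : 1 + 2*(m:ℝ)*(1/x) ≤ 2 := by nlinarith
      have hxm' : (0:ℝ) ≤ x^m := pow_nonneg hx0.le m
      calc (x+1)^m = x^m * (1+1/x)^m := h1
        _ ≤ x^m * 2 := mul_le_mul_of_nonneg_left (h2.trans h3) hxm'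
        _ = 2*x^m := by ring
    have hxm : (0:ℝ) ≤ x^m := pow_nonneg hx0.le m
    have hv4 : v^2 ≤ 4 := by nlinarith
    have hX0 : (0:ℝ) ≤ x + 1 := by linarith
    have hXm : (0:ℝ) ≤ (x+1)^m := pow_nonneg hX0 m
    have hXm1 : (0:ℝ) ≤ (x+1)^(m+1) := pow_nonneg hX0 (m+1)
    have hre0 : 0 ≤ (z ^ (m+1)).re := by
      have hb : ((m:ℝ)+1)^2*(x+1)^m*v^2 ≤ ((m:ℝ)+1)^2*(2*x^m)*4 := by
        have := sq_nonneg ((m:ℝ)+1)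
        gcongr
      have hd : 8*((m:ℝ)+1)^2 ≤ x := by nlinarith [sq_nonneg ((m:ℝ)+1)]
      have hc : ((m:ℝ)+1)^2*(2*x^m)*4 ≤ x^(m+1) := by
        nlinarith [mul_le_mul_of_nonneg_right hd hxm, pow_succ x m]
      linarith
    have hstep : z ^ (m+2) = z ^ (m+1) * z := by ring
    have hreS : (z ^ (m+2)).re = (z^(m+1)).re * x - (z^(m+1)).im * v := by
      rw [hstep, Complex.mul_re, hzre, hzim]
    have himS : (z ^ (m+2)).im = (z^(m+1)).re * v + (z^(m+1)).im * x := by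
      rw [hstep, Complex.mul_im, hzre, hzim]
    have hXe : (x+1)^(m+1) = (x+1)^m*(x+1) := by ring
    have hAx : (z^(m+1)).re * x ≤ (x+1)^(m+1) * x := mul_le_mul_of_nonneg_right hre2 hx0.le
    have hBx : (z^(m+1)).im * x ≤ (((m:ℝ)+1)*(x+1)^m*v) * x := mul_le_mul_of_nonneg_right him hx0.le
    have hBv : (z^(m+1)).im * v ≤ (((m:ℝ)+1)*(x+1)^m*v) * v := mul_le_mul_of_nonneg_right him hv0
    have hAv : (z^(m+1)).re * v ≤ (x+1)^(m+1) * v := mul_le_mul_of_nonneg_right hre2 hv0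
    have hxXm : (x+1)^m * x ≤ (x+1)^(m+1) := by
      rw [hXe]; exact mul_le_mul_of_nonneg_left (by linarith) hXm
    have hXmle : (x+1)^m ≤ (x+1)^(m+1) := by
      rw [hXe]; exact le_mul_of_one_le_right hXm (by linarith)
    refine ⟨⟨?_, ?_⟩, ?_, ?_⟩
    · rw [himS]
      exact add_nonneg (mul_nonneg hre0 hv0) (mul_nonneg him0 hx0.le)
    · rw [himS]
      push_cast
      have h6 : (((m:ℝ)+1)*v)*((x+1)^m*x) ≤ (((m:ℝ)+1)*v)*(x+1)^(m+1) :=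
        mul_le_mul_of_nonneg_left hxXm (mul_nonneg (by positivity) hv0)
      linarith [hAv, hBx, h6]
    · rw [hreS]
      push_cast
      have h6 : (x^(m+1) - ((m:ℝ)+1)^2*(x+1)^m*v^2) * x ≤ (z^(m+1)).re * x :=
        mul_le_mul_of_nonneg_right hre1 hx0.le
      have h7 : (((m:ℝ)+1)^2*v^2)*((x+1)^m*x) ≤ (((m:ℝ)+1)^2*v^2)*(x+1)^(m+1) :=
        mul_le_mul_of_nonneg_left hxXm (mul_nonneg (sq_nonneg _) (sq_nonneg _))
      have h8 : (((m:ℝ)+1)*v^2)*((x+1)^m) ≤ (((m:ℝ)+1)*v^2)*(x+1)^(m+1) :=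
        mul_le_mul_of_nonneg_left hXmle (mul_nonneg (by positivity) (sq_nonneg _))
      have h9 : x^(m+1+1) = x^(m+1)*x := pow_succ x (m+1)
      have h10 : (0:ℝ) ≤ ((m:ℝ)+2)*((x+1)^(m+1)*v^2) :=
        mul_nonneg (by positivity) (mul_nonneg hXm1 (sq_nonneg v))
      linarith [h6, h7, h8, hBv, h10]
    · rw [hreS]
      have h9 : (x+1)^(m+1+1) = (x+1)^(m+1)*(x+1) := pow_succ (x+1) (m+1)
      linarith [hAx, mul_nonneg him0 hv0, hXm1]

set_option maxHeartbeats 2000000 in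
/-- **Lemma 3.5**: lower bound `Re V_ρ(x) ≥ c₁/R + c₂` outside a compact set, for the
distorted potential `V_ρ(x) = e^{i(π/2 − ε(2k−1)/(2k+1))}ξ(x)² + iρξ(x)^{2k+1}`, where
`ξ = ξ_ρ` is the exterior complex distortion of Definition 3.3 with cut-off point
`x₀ = −a·ρ^{−1/(2k−1)}`, `q = (2k−1)/2` and `sin ε = ρ^{1/q}/R`. -/
theorem lemma_3_5_potential_lower_bound
    (k : ℕ) (hk : 1 ≤ k) (η : ℝ) (hη : η ∈ Set.Ioo (0 : ℝ) 1) :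
    ∃ a > (0:ℝ), ∃ c₁ > (0:ℝ), ∃ c₂ : ℝ, ∀ R > (0:ℝ), ∃ ρ₀ > (0:ℝ), ∃ n₀ : ℕ, 1 ≤ n₀ ∧
      ∀ ρ : ℝ, 0 < ρ → ρ < ρ₀ →
        ρ ^ (2 / (2 * (k : ℝ) - 1)) < R ∧
        ∀ ξ : ℝ → ℂ,
          (∀ x : ℝ, -a * ρ ^ (-(1 : ℝ) / (2 * (k : ℝ) - 1)) ≤ x →
            ξ x = (x : ℂ) - Complex.I * (η : ℂ) *
              ((Real.arctan (x * (1 + x ^ 2) ^ (-(1 / 4 : ℝ))) : ℝ) : ℂ)) →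
          (∀ x : ℝ, x ≤ -a * ρ ^ (-(1 : ℝ) / (2 * (k : ℝ) - 1)) - η → ξ x = (x : ℂ)) →
          (∀ x ∈ Set.Icc (-a * ρ ^ (-(1 : ℝ) / (2 * (k : ℝ) - 1)) - η)
              (-a * ρ ^ (-(1 : ℝ) / (2 * (k : ℝ) - 1))), (ξ x).re = x) →
          MonotoneOn (fun x => (ξ x).im)
            (Set.Icc (-a * ρ ^ (-(1 : ℝ) / (2 * (k : ℝ) - 1)) - η)
              (-a * ρ ^ (-(1 : ℝ) / (2 * (k : ℝ) - 1)))) →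
          ∀ x : ℝ, (n₀ : ℝ) ≤ |x| →
            c₁ / R + c₂ ≤
              (Complex.exp (Complex.I * ((π / 2 : ℝ) -
                    Real.arcsin (ρ ^ (2 / (2 * (k : ℝ) - 1)) / R)
                      * (2 * (k : ℝ) - 1) / (2 * (k : ℝ) + 1) : ℝ))
                  * (ξ x) ^ 2
                + Complex.I * (ρ : ℂ) * (ξ x) ^ (2 * k + 1)).re := by

  obtain ⟨hη0, hη1⟩ := hη
  have hkr : (1:ℝ) ≤ (k:ℝ) := by exact_mod_cast hk
  set D : ℝ := 2 * (k:ℝ) - 1 with hD_def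
  set K : ℝ := 2 * (k:ℝ) + 1 with hK_def
  have hD1 : (1:ℝ) ≤ D := by simp only [hD_def]; linarith
  have hD0 : (0:ℝ) < D := by linarith
  have hK3 : (3:ℝ) ≤ K := by simp only [hK_def]; linarith
  have hK0 : (0:ℝ) < K := by linarith
  -- the cut-off constant a
  set a : ℝ := 1 / (2^(2*k+2) * K) with ha_def
  have h2k2 : (4:ℝ) ≤ 2^(2*k+2) := by
    calc (4:ℝ) = 2^2 := by norm_num
    _ ≤ 2^(2*k+2) := by
        apply pow_le_pow_right₀ (by norm_num)
        omega
  have ha0 : 0 < a := by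
    apply div_pos one_pos
    positivity
  have ha1 : 2 * a ≤ 1 := by
    rw [ha_def]
    rw [mul_one_div, div_le_one (by positivity)]
    nlinarith
  -- key smallness of a : (2k+1) * 2^(k+1) * a ≤ 1/4
  have ha_small : K * 2^(k+1) * a ≤ 1/4 := by
    rw [ha_def, mul_one_div]
    rw [div_le_div_iff₀ (by positivity) (by norm_num)]
    have h1 : (2:ℝ)^(2*k+2) = 2^(k+1) * 2^(k+1) := by
      rw [← pow_add]; congr 1; omega
    have h2 : (4:ℝ) ≤ 2^(k+1) := by
      calc (4:ℝ) = 2^2 := by norm_num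
      _ ≤ 2^(k+1) := by
          apply pow_le_pow_right₀ (by norm_num)
          omega
    nlinarith [mul_le_mul_of_nonneg_right h2 (show (0:ℝ) ≤ 2^(k+1)*K by positivity),
      pow_pos (show (0:ℝ) < 2 by norm_num) (k+1)]
  set c₁ : ℝ := D / K * a^2 / π with hc₁_def
  have hc₁0 : 0 < c₁ := by
    have := Real.pi_pos
    positivity
  have hDK : D ≤ K := by rw [hD_def, hK_def]; linarith
  have hDnat : ((2*k-1 : ℕ):ℝ) = D := by
    rw [hD_def]; push_cast [Nat.cast_sub (by omega : 1 ≤ 2*k)]; ring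
  have hK2k : ((2*k : ℕ):ℝ) + 1 = K := by rw [hK_def]; push_cast; ring
  clear_value D K a c₁
  refine ⟨a, ha0, c₁, hc₁0, 0, ?_⟩
  intro R hR
  set ρ₀ : ℝ := min ((R/2) ^ (D/2)) ((a/3) ^ D) with hρ₀_def
  have hρ₀0 : 0 < ρ₀ := by
    apply lt_min
    · exact Real.rpow_pos_of_pos (by linarith) _
    · exact Real.rpow_pos_of_pos (by positivity) _
  have hρ₀le1 : ρ₀ ≤ (R/2) ^ (D/2) := min_le_left _ _
  have hρ₀le2 : ρ₀ ≤ (a/3) ^ D := min_le_right _ _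
  clear_value ρ₀
  set n₀ : ℕ := ⌈(100:ℝ) * K^2 + 4*c₁/(η*R)⌉₊ with hn₀_def
  have hn₀big : (100:ℝ) * K^2 + 4*c₁/(η*R) ≤ n₀ := Nat.le_ceil _
  have hn₀1 : 1 ≤ n₀ := by
    rw [hn₀_def, Nat.one_le_ceil_iff]
    have h1 : 0 < 4*c₁/(η*R) := by positivity
    have h2 : (0:ℝ) ≤ 100 * K^2 := by positivity
    linarith
  have hn₀K : (100:ℝ) * K^2 ≤ n₀ := by
    have h2 : (0:ℝ) ≤ 4*c₁/(η*R) := by positivity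
    linarith
  have hn₀c : 4*c₁/(η*R) ≤ n₀ := by
    have h2 : (0:ℝ) ≤ 100 * K^2 := by positivity
    linarith
  clear_value n₀
  refine ⟨ρ₀, hρ₀0, n₀, hn₀1, ?_⟩
  intro ρ hρ0 hρρ₀
  -- rpow facts
  have he0 : (0:ℝ) < 2/D := by positivity
  have hyR2 : ρ ^ (2/D) < R/2 := by
    have h1 : ρ ^ (2/D) < ((R/2) ^ (D/2)) ^ (2/D) := by
      apply Real.rpow_lt_rpow hρ0.le (lt_of_lt_of_le hρρ₀ hρ₀le1) he0
    have h2 : ((R/2) ^ (D/2)) ^ (2/D) = R/2 := by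
      rw [← Real.rpow_mul (by linarith : (0:ℝ) ≤ R/2)]
      rw [show D/2 * (2/D) = 1 by field_simp, Real.rpow_one]
    rwa [h2] at h1
  have hyR : ρ ^ (2/D) < R := by linarith
  have hXa : ρ ^ (1/D) < a/3 := by
    have h1 : ρ ^ (1/D) < ((a/3) ^ D) ^ (1/D) := by
      apply Real.rpow_lt_rpow hρ0.le (lt_of_lt_of_le hρρ₀ hρ₀le2) (by positivity)
    have h2 : ((a/3) ^ D) ^ (1/D) = a/3 := by
      rw [← Real.rpow_mul (by positivity : (0:ℝ) ≤ a/3)]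
      rw [show D * (1/D) = 1 by field_simp, Real.rpow_one]
    rwa [h2] at h1
  constructor
  · exact hyR
  intro ξ hξ1 hξ2 hξ3 hmono x hxabs
  -- basic positivity
  have hπ := Real.pi_pos
  have hπ3 := Real.pi_gt_three
  have hπ4 := Real.pi_le_four
  -- trig facts
  set y := ρ ^ (2/D) / R with hy_def
  have hy0 : 0 < y := div_pos (Real.rpow_pos_of_pos hρ0 _) hR
  have hy2 : y ≤ 1/2 := by
    rw [hy_def, div_le_iff₀ hR]
    linarith only [hyR2]
  set ε := Real.arcsin y with hε_def
  have hε0 : 0 ≤ ε := Real.arcsin_nonneg.2 hy0.le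
  have hεπ2 : ε ≤ π/2 := Real.arcsin_le_pi_div_two y
  have hsinε : Real.sin ε = y := Real.sin_arcsin (by linarith only [hy0]) (by linarith only [hy2])
  have hyε : y ≤ ε := by
    have h := Real.sin_le hε0
    linarith only [h, hsinε]
  set ε' := ε * D / K with hε'_def
  have hε'0 : 0 ≤ ε' := div_nonneg (mul_nonneg hε0 hD0.le) hK0.le
  have hε'ε : ε' ≤ ε := by
    rw [hε'_def, div_le_iff₀ hK0]
    exact mul_le_mul_of_nonneg_left hDK hε0
  have hsin' : (2/π) * ε' ≤ Real.sin ε' := Real.mul_le_sin hε'0 (le_trans hε'ε hεπ2)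
  have hsin0 : 0 ≤ Real.sin ε' := le_trans (by positivity) hsin'
  have hslow : 2/π * (D/K) * y ≤ Real.sin ε' := by
    refine le_trans ?_ hsin'
    rw [hε'_def]
    have h1 : (D/K) * y ≤ (D/K) * ε := mul_le_mul_of_nonneg_left hyε (by positivity)
    have h2 : (2/π) * ((D/K) * y) ≤ (2/π) * ((D/K) * ε) :=
      mul_le_mul_of_nonneg_left h1 (by positivity)
    calc 2/π * (D/K) * y = (2/π) * ((D/K) * y) := by ring
      _ ≤ (2/π) * ((D/K) * ε) := h2
      _ = 2/π * (ε * D / K) := by ring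
  have hcos : 1/2 ≤ Real.cos ε' := by
    have h1 : Real.cos ε ≤ Real.cos ε' :=
      Real.cos_le_cos_of_nonneg_of_le_pi hε'0 (by linarith only [hεπ2, hπ]) hε'ε
    have hysq := mul_self_le_mul_self hy0.le hy2
    have h2 : Real.cos ε = Real.sqrt (1 - y^2) := by rw [hε_def, Real.cos_arcsin]
    have h3 : (1:ℝ)/2 ≤ Real.sqrt (1 - y^2) := by
      rw [Real.le_sqrt (by norm_num) (by nlinarith only [hysq])]
      nlinarith only [hysq]
    linarith only [h1, h2, h3]
  have hcos1 : Real.cos ε' ≤ 1 := Real.cos_le_one _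
  clear_value y ε ε'
  -- the real part formula
  have hExp : Complex.exp (Complex.I * ((π/2 - ε' : ℝ) : ℂ)) =
      (Real.sin ε' : ℂ) + (Real.cos ε' : ℂ) * Complex.I := by
    rw [mul_comm, Complex.exp_mul_I, ← Complex.ofReal_cos, ← Complex.ofReal_sin,
      Real.cos_pi_div_two_sub, Real.sin_pi_div_two_sub]
  have hre : ∀ z : ℂ,
      (Complex.exp (Complex.I * ((π/2 - ε' : ℝ) : ℂ)) * z^2
        + Complex.I * (ρ:ℂ) * z^(2*k+1)).re
      = Real.sin ε' * (z.re^2 - z.im^2) - Real.cos ε' * (2*z.re*z.im)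
        - ρ * (z^(2*k+1)).im := by
    intro z
    rw [hExp]
    have h2re : (z^2).re = z.re^2 - z.im^2 := by rw [sq, Complex.mul_re]; ring
    have h2im : (z^2).im = 2*z.re*z.im := by rw [sq, Complex.mul_im]; ring
    simp only [Complex.add_re, Complex.mul_re, Complex.mul_im, Complex.add_im,
      Complex.I_re, Complex.I_im, Complex.ofReal_re, Complex.ofReal_im, h2re, h2im]
    ring
  -- rpow identities
  have hP0 : 0 < ρ ^ (-(1:ℝ)/D) := Real.rpow_pos_of_pos hρ0 _
  have hPinv : ρ ^ (-(1:ℝ)/D) = (ρ ^ ((1:ℝ)/D))⁻¹ := by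
    rw [neg_div, Real.rpow_neg hρ0.le]
  have hXX3 : 3 < a * ρ ^ (-(1:ℝ)/D) := by
    have ht0 : 0 < ρ ^ ((1:ℝ)/D) := Real.rpow_pos_of_pos hρ0 _
    rw [hPinv, ← div_eq_mul_inv, lt_div_iff₀ ht0]
    linarith only [hXa]
  have hXX0 : 0 < a * ρ ^ (-(1:ℝ)/D) := by positivity
  have hone : ρ ^ (2/D) * (ρ ^ (-(1:ℝ)/D))^(2:ℕ) = 1 := by
    rw [← Real.rpow_natCast (ρ ^ (-(1:ℝ)/D)) 2, ← Real.rpow_mul hρ0.le,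
      ← Real.rpow_add hρ0, show 2/D + -(1:ℝ)/D * ((2:ℕ):ℝ) = 0 by push_cast; ring,
      Real.rpow_zero]
  have hinv : (ρ ^ (-(1:ℝ)/D))^(2*k-1 : ℕ) = ρ⁻¹ := by
    rw [← Real.rpow_natCast _ (2*k-1), ← Real.rpow_mul hρ0.le, hDnat,
      show -(1:ℝ)/D * D = -1 by field_simp, Real.rpow_neg_one]
  have hkey : 2/π * (D/K) * y * (a * ρ ^ (-(1:ℝ)/D))^2 = 2*c₁/R := by
    have h1 : 2/π * (D/K) * y * (a * ρ ^ (-(1:ℝ)/D))^2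
        = (2*(D / K * a^2 / π)/R) * (ρ ^ (2/D) * (ρ ^ (-(1:ℝ)/D))^(2:ℕ)) := by
      rw [hy_def]; ring
    rw [h1, hone, mul_one, hc₁_def]
  -- bad term bound
  have hbad : ∀ (s v : ℝ) (z : ℂ), z.re = -s → z.im = v → 0 ≤ v → v ≤ 2 →
      2 ≤ s → s ≤ 2*(a * ρ ^ (-(1:ℝ)/D)) →
      ρ * |(z^(2*k+1)).im| ≤ 1/4 * (s*v) := by
    intro s v z hzre hzim hv0 hv2 hs2 hsXX
    have h1 : |(z^(2*k+1)).im| ≤ (((2*k : ℕ):ℝ)+1) * ‖z‖ ^ (2*k) * |z.im| :=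
      im_pow_le z (2*k)
    have habs : ‖z‖ ^ (2*k) = (s^2 + v^2)^k := by
      rw [pow_mul]
      congr 1
      rw [Complex.sq_norm, Complex.normSq_apply, hzre, hzim]
      ring
    have h2 : (s^2 + v^2)^k ≤ (2*s^2)^k := by
      apply pow_le_pow_left₀ (by positivity)
      nlinarith only [mul_self_le_mul_self hv0 hv2, hs2]
    have h3 : (2*s^2)^k = 2^k * s^(2*k) := by rw [mul_pow, ← pow_mul]
    have hs0 : (0:ℝ) ≤ s := by linarith only [hs2]
    have h4 : s^(2*k) = s^(2*k-1) * s := by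
      rw [← pow_succ]; congr 1; omega
    have h5 : s^(2*k-1) ≤ (2*(a * ρ ^ (-(1:ℝ)/D)))^(2*k-1) :=
      pow_le_pow_left₀ hs0 hsXX _
    have h6 : (2*(a * ρ ^ (-(1:ℝ)/D)))^(2*k-1)
        = (2*a)^(2*k-1) * (ρ ^ (-(1:ℝ)/D))^(2*k-1) := by
      rw [← mul_pow]; congr 1; ring
    have h7 : (2*a)^(2*k-1) ≤ 2*a :=
      pow_le_of_le_one (by positivity) ha1 (by omega)
    have h8 : s^(2*k-1) ≤ 2*a * ρ⁻¹ := by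
      calc s^(2*k-1) ≤ (2*a)^(2*k-1) * (ρ ^ (-(1:ℝ)/D))^(2*k-1) := h5.trans_eq h6
        _ ≤ 2*a * (ρ ^ (-(1:ℝ)/D))^(2*k-1) :=
            mul_le_mul_of_nonneg_right h7 (by positivity)
        _ = 2*a * ρ⁻¹ := by rw [hinv]
    have himb : |(z^(2*k+1)).im| ≤ K * (2^k * ((2*a*ρ⁻¹) * s)) * v := by
      rw [hzim, abs_of_nonneg hv0] at h1
      have hA : ‖z‖ ^ (2*k) ≤ 2^k * ((2*a*ρ⁻¹) * s) := by
        rw [habs]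
        calc (s^2+v^2)^k ≤ (2*s^2)^k := h2
          _ = 2^k * s^(2*k) := h3
          _ = 2^k * (s^(2*k-1) * s) := by rw [h4]
          _ ≤ 2^k * ((2*a*ρ⁻¹) * s) := by
              exact mul_le_mul_of_nonneg_left
                (mul_le_mul_of_nonneg_right h8 hs0) (by positivity)
      calc |(z^(2*k+1)).im| ≤ (((2*k : ℕ):ℝ)+1) * ‖z‖ ^ (2*k) * v := h1
        _ = K * ‖z‖ ^ (2*k) * v := by rw [hK2k]
        _ ≤ K * (2^k * ((2*a*ρ⁻¹) * s)) * v :=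
            mul_le_mul_of_nonneg_right (mul_le_mul_of_nonneg_left hA hK0.le) hv0
    have hρinv : ρ * ρ⁻¹ = 1 := mul_inv_cancel₀ hρ0.ne'
    calc ρ * |(z^(2*k+1)).im| ≤ ρ * (K * (2^k * ((2*a*ρ⁻¹) * s)) * v) :=
          mul_le_mul_of_nonneg_left himb hρ0.le
      _ = (K * 2^(k+1) * a) * (s * v) * (ρ * ρ⁻¹) := by ring
      _ = (K * 2^(k+1) * a) * (s * v) := by rw [hρinv, mul_one]
      _ ≤ 1/4 * (s*v) := mul_le_mul_of_nonneg_right ha_small (by positivity)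
  have hK9 : (9:ℝ) ≤ K^2 := by nlinarith only [hK3, sq_nonneg (K-3)]
  -- split on the sign of x
  rw [add_zero, hre (ξ x)]
  rcases le_or_gt 0 x with hx0s | hx0s
  · -- positive x
    have hxx : (n₀:ℝ) ≤ x := by rwa [abs_of_nonneg hx0s] at hxabs
    have hxK : 100*K^2 ≤ x := by linarith only [hxx, hn₀K]
    have hx3 : 3 ≤ x := by linarith only [hxK, hK9]
    have hx9 : 9 ≤ x^2 := by nlinarith only [hx3, sq_nonneg (x-3)]
    have hxc : 4*c₁/(η*R) ≤ x := by linarith only [hxx, hn₀c]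
    have hzeq := hξ1 x (by linarith only [hXX0, hx0s] : -a * ρ ^ (-(1:ℝ)/D) ≤ x)
    set A := Real.arctan (x * (1+x^2) ^ (-(1/4:ℝ))) with hA_def
    have hu : (ξ x).re = x := by rw [hzeq]; simp
    have hv : (ξ x).im = -(η*A) := by rw [hzeq]; simp
    have hA2 : A ≤ 2 := by
      have h := Real.arctan_lt_pi_div_two (x * (1+x^2) ^ (-(1/4:ℝ)))
      rw [← hA_def] at h
      linarith only [h, hπ4]
    have hb0 : (0:ℝ) < 1 + x^2 := by positivity
    have hA4 : (3:ℝ)/4 ≤ A := by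
      have hle : (1+x^2) ^ ((1/4:ℝ)) ≤ x := by
        have h5 : 1+x^2 ≤ x^(4:ℕ) := by
          nlinarith only [hx9, sq_nonneg (x^2-9)]
        calc (1+x^2)^((1/4:ℝ)) ≤ (x^(4:ℕ))^((1/4:ℝ)) :=
              Real.rpow_le_rpow hb0.le h5 (by norm_num)
          _ = x := by
              rw [← Real.rpow_natCast x 4, ← Real.rpow_mul (by linarith only [hx3] : (0:ℝ) ≤ x)]
              norm_num
      have ht0 : 0 < (1+x^2) ^ ((1/4:ℝ)) := Real.rpow_pos_of_pos hb0 _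
      have harg : (1:ℝ) ≤ x * (1+x^2) ^ (-(1/4:ℝ)) := by
        rw [Real.rpow_neg hb0.le, ← div_eq_mul_inv, le_div_iff₀ ht0]
        linarith only [hle]
      have h := Real.arctan_strictMono.monotone harg
      rw [Real.arctan_one, ← hA_def] at h
      linarith only [h, hπ3]
    have hA0 : (0:ℝ) ≤ A := by linarith only [hA4]
    have hηA0 : 0 ≤ η*A := mul_nonneg hη0.le hA0
    have hηA2 : η*A ≤ 2 := by
      have h := mul_le_mul_of_nonneg_right hη1.le hA0
      linarith only [h, hA2]
    set w : ℂ := (x:ℂ) + (η*A : ℝ)*Complex.I with hw_def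
    have hwre : w.re = x := by simp [hw_def]
    have hwim : w.im = η*A := by simp [hw_def]
    have hwconj : ξ x = (starRingEnd ℂ) w := by
      apply Complex.ext
      · simp [hu, hwre]
      · simp [hv, hwim]
    clear_value A w
    have hcond : 8*(((2*k:ℕ):ℝ)+1)^2 + 2*(((2*k:ℕ):ℝ)+1) ≤ x := by
      rw [hK2k]
      nlinarith only [hxK, hK3, hK9, mul_le_mul_of_nonneg_left hK3 hK0.le]
    have him0 : 0 ≤ (w^(2*k+1)).im :=
      (pos_pow x (η*A) w hwre hwim hηA0 hηA2 (2*k) hcond).1.1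
    have himξ : ((ξ x)^(2*k+1)).im = -(w^(2*k+1)).im := by
      rw [hwconj, ← map_pow]
      exact Complex.conj_im _
    rw [hu, hv, himξ]
    have t1 : 0 ≤ Real.sin ε' * (x^2 - (-(η*A))^2) := by
      apply mul_nonneg hsin0
      nlinarith only [mul_self_le_mul_self hηA0 hηA2, hx9]
    have t2 : (1/2) * (2*x*(η*A)) ≤ Real.cos ε' * (2*x*(η*A)) :=
      mul_le_mul_of_nonneg_right hcos (by positivity)
    have t4 : c₁/R ≤ 3/4 * (x*η) := by
      rw [div_le_iff₀ hR]
      have h4 : 4*c₁ ≤ x*(η*R) := by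
        rw [← div_le_iff₀ (by positivity : 0 < η*R)]
        exact hxc
      nlinarith only [h4, mul_nonneg (mul_nonneg hx0s hη0.le) hR.le]
    have t5 : 0 ≤ ρ * (w^(2*k+1)).im := mul_nonneg hρ0.le him0
    have t6 : 0 ≤ x*η*(A - 3/4) :=
      mul_nonneg (mul_nonneg hx0s hη0.le) (by linarith only [hA4])
    nlinarith only [t1, t2, t4, t5, t6]
  · -- negative x
    have hs : (n₀:ℝ) ≤ -x := by rwa [abs_of_neg hx0s] at hxabs
    have hsK : 100*K^2 ≤ -x := by linarith only [hs, hn₀K]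
    have hs3 : 3 ≤ -x := by linarith only [hsK, hK9]
    have hs9 : 9 ≤ x^2 := by nlinarith only [hs3, sq_nonneg (x+3)]
    have hsc : 4*c₁/(η*R) ≤ -x := by linarith only [hs, hn₀c]
    rcases le_or_gt x (-a * ρ ^ (-(1:ℝ)/D) - η) with hxB | hxA
    · -- region B : ξ real
      have hz := hξ2 x hxB
      have hu : (ξ x).re = x := by rw [hz]; simp
      have hv : (ξ x).im = 0 := by rw [hz]; simp
      have him : ((ξ x)^(2*k+1)).im = 0 := by
        rw [hz, ← Complex.ofReal_pow, Complex.ofReal_im]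
      rw [hu, hv, him]
      have hx₀sq : (a * ρ ^ (-(1:ℝ)/D))^2 ≤ x^2 := by
        have h := mul_self_le_mul_self hXX0.le
          (show a * ρ ^ (-(1:ℝ)/D) ≤ -x by linarith only [hxB, hη0])
        nlinarith only [h]
      have h1 : 2/π * (D/K) * y * (a * ρ ^ (-(1:ℝ)/D))^2 ≤ Real.sin ε' * x^2 :=
        mul_le_mul hslow hx₀sq (by positivity) hsin0
      rw [hkey] at h1
      have h2 : 0 < c₁/R := by positivity
      have hdiv : 2*c₁/R = 2*(c₁/R) := by ring
      nlinarith only [h1, h2, hdiv]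
    · -- x > x₀ - η
      rcases le_or_gt (-a * ρ ^ (-(1:ℝ)/D)) x with hxA2 | hxC
      · -- region A : distortion formula, x negative
        have hzeq := hξ1 x hxA2
        set A := Real.arctan (x * (1+x^2) ^ (-(1/4:ℝ))) with hA_def
        have hu : (ξ x).re = x := by rw [hzeq]; simp
        have hv : (ξ x).im = -(η*A) := by rw [hzeq]; simp
        have hAneg : A = - Real.arctan ((-x) * (1+(-x)^2) ^ (-(1/4:ℝ))) := by
          rw [hA_def, show 1 + (-x)^2 = 1 + x^2 by ring, ← Real.arctan_neg]
          congr 1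
          ring
        set A' := Real.arctan ((-x) * (1+(-x)^2) ^ (-(1/4:ℝ))) with hA'_def
        have hv' : (ξ x).im = η*A' := by rw [hv, hAneg]; ring
        have hb0 : (0:ℝ) < 1 + (-x)^2 := by positivity
        have hA'2 : A' ≤ 2 := by
          have h := Real.arctan_lt_pi_div_two ((-x) * (1+(-x)^2) ^ (-(1/4:ℝ)))
          rw [← hA'_def] at h
          linarith only [h, hπ4]
        have hA'4 : (3:ℝ)/4 ≤ A' := by
          have hle : (1+(-x)^2) ^ ((1/4:ℝ)) ≤ -x := by
            have h5 : 1+(-x)^2 ≤ (-x)^(4:ℕ) := by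
              nlinarith only [hs9, sq_nonneg (x^2-9)]
            calc (1+(-x)^2)^((1/4:ℝ)) ≤ ((-x)^(4:ℕ))^((1/4:ℝ)) :=
                  Real.rpow_le_rpow hb0.le h5 (by norm_num)
              _ = -x := by
                  rw [← Real.rpow_natCast (-x) 4,
                    ← Real.rpow_mul (by linarith only [hs3] : (0:ℝ) ≤ -x)]
                  norm_num
          have ht0 : 0 < (1+(-x)^2) ^ ((1/4:ℝ)) := Real.rpow_pos_of_pos hb0 _
          have harg : (1:ℝ) ≤ (-x) * (1+(-x)^2) ^ (-(1/4:ℝ)) := by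
            rw [Real.rpow_neg hb0.le, ← div_eq_mul_inv, le_div_iff₀ ht0]
            linarith only [hle]
          have h := Real.arctan_strictMono.monotone harg
          rw [Real.arctan_one, ← hA'_def] at h
          linarith only [h, hπ3]
        have hA'0 : (0:ℝ) ≤ A' := by linarith only [hA'4]
        have hηA0 : 0 ≤ η*A' := mul_nonneg hη0.le hA'0
        have hηA2 : η*A' ≤ 2 := by
          have h := mul_le_mul_of_nonneg_right hη1.le hA'0
          linarith only [h, hA'2]
        clear_value A A'
        have hsXX : -x ≤ 2*(a * ρ ^ (-(1:ℝ)/D)) := by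
          linarith only [hxA, hη1, hXX3]
        have hbadx := hbad (-x) (η*A') (ξ x) (by rw [hu]; ring) hv' hηA0 hηA2
          (by linarith only [hs3]) hsXX
        rw [hu, hv']
        have t1 : 0 ≤ Real.sin ε' * (x^2 - (η*A')^2) := by
          apply mul_nonneg hsin0
          nlinarith only [mul_self_le_mul_self hηA0 hηA2, hs9]
        have hxpos : (0:ℝ) ≤ -x := by linarith only [hs3]
        have t2 : (1/2) * (2*(-x)*(η*A')) ≤ Real.cos ε' * (2*(-x)*(η*A')) :=
          mul_le_mul_of_nonneg_right hcos
            (by positivity)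
        have t3 : -(ρ * ((ξ x)^(2*k+1)).im) ≥ -(1/4 * ((-x)*(η*A'))) := by
          have h1 : ρ * ((ξ x)^(2*k+1)).im ≤ ρ * |((ξ x)^(2*k+1)).im| :=
            mul_le_mul_of_nonneg_left (le_abs_self _) hρ0.le
          linarith only [h1, hbadx]
        have t4 : c₁/R ≤ 3/4 * ((-x)*(η*A')) := by
          rw [div_le_iff₀ hR]
          have h4 : 4*c₁ ≤ (-x)*(η*R) := by
            rw [← div_le_iff₀ (by positivity : 0 < η*R)]
            exact hsc
          have hint1 : 0 ≤ ((-x)*R)*(η*A' - 3/4*η) :=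
            mul_nonneg (mul_nonneg hxpos hR.le)
              (by nlinarith only [mul_nonneg hη0.le (show (0:ℝ) ≤ A' - 3/4 by linarith only [hA'4])])
          have hint2 : 0 ≤ (-x)*η*R := mul_nonneg (mul_nonneg hxpos hη0.le) hR.le
          nlinarith only [h4, hint1, hint2]
        linarith only [t1, t2, t3, t4]
      · -- region C : interpolation interval
        have hmem : x ∈ Set.Icc (-a * ρ ^ (-(1:ℝ)/D) - η) (-a * ρ ^ (-(1:ℝ)/D)) :=
          ⟨hxA.le, hxC.le⟩
        have hu : (ξ x).re = x := hξ3 x hmem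
        have hmemL : (-a * ρ ^ (-(1:ℝ)/D) - η) ∈
            Set.Icc (-a * ρ ^ (-(1:ℝ)/D) - η) (-a * ρ ^ (-(1:ℝ)/D)) :=
          ⟨le_refl _, by linarith only [hη0]⟩
        have hmemR : (-a * ρ ^ (-(1:ℝ)/D)) ∈
            Set.Icc (-a * ρ ^ (-(1:ℝ)/D) - η) (-a * ρ ^ (-(1:ℝ)/D)) :=
          ⟨by linarith only [hη0], le_refl _⟩
        have himL : (ξ (-a * ρ ^ (-(1:ℝ)/D) - η)).im = 0 := by
          rw [hξ2 _ (le_refl _)]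
          simp
        have hv0 : 0 ≤ (ξ x).im := by
          have h := hmono hmemL hmem hxA.le
          simp only at h
          rw [himL] at h
          exact h
        have hzeq0 := hξ1 (-a * ρ ^ (-(1:ℝ)/D)) (le_refl _)
        set A₀ := Real.arctan ((-a * ρ ^ (-(1:ℝ)/D)) * (1+(-a * ρ ^ (-(1:ℝ)/D))^2) ^ (-(1/4:ℝ))) with hA₀_def
        have h1 := Real.neg_pi_div_two_lt_arctan
          ((-a * ρ ^ (-(1:ℝ)/D)) * (1+(-a * ρ ^ (-(1:ℝ)/D))^2) ^ (-(1/4:ℝ)))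
        rw [← hA₀_def] at h1
        clear_value A₀
        have himRv : (ξ (-a * ρ ^ (-(1:ℝ)/D))).im = -(η*A₀) := by
          rw [hzeq0]; simp
        have himR : (ξ (-a * ρ ^ (-(1:ℝ)/D))).im ≤ 2 := by
          rw [himRv]
          have hint1 : 0 ≤ η * (A₀ + π/2) := mul_nonneg hη0.le (by linarith only [h1])
          have hint2 : 0 ≤ (1-η)*π := mul_nonneg (by linarith only [hη1]) hπ.le
          nlinarith only [hint1, hint2, hπ4]
        have hv2 : (ξ x).im ≤ 2 := by
          have h := hmono hmem hmemR hxC.le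
          simp only at h
          linarith only [h, himR]
        have hxpos : (0:ℝ) ≤ -x := by linarith only [hs3]
        have hsXX : -x ≤ 2*(a * ρ ^ (-(1:ℝ)/D)) := by
          linarith only [hxA, hη1, hXX3]
        have hbadx := hbad (-x) ((ξ x).im) (ξ x) (by rw [hu]; ring) rfl hv0 hv2
          (by linarith only [hs3]) hsXX
        rw [hu]
        have hxsq : (a * ρ ^ (-(1:ℝ)/D))^2 ≤ x^2 := by
          have h := mul_self_le_mul_self hXX0.le
            (show a * ρ ^ (-(1:ℝ)/D) ≤ -x by linarith only [hxC])
          nlinarith only [h]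
        have hXX9 : 9 ≤ (a * ρ ^ (-(1:ℝ)/D))^2 := by
          nlinarith only [hXX3, sq_nonneg (a * ρ ^ (-(1:ℝ)/D) - 3)]
        have hvsq : ((ξ x).im)^2 ≤ 4 := by
          nlinarith only [mul_self_le_mul_self hv0 hv2]
        have hq : (a * ρ ^ (-(1:ℝ)/D))^2 / 2 ≤ x^2 - ((ξ x).im)^2 := by
          linarith only [hxsq, hXX9, hvsq]
        have h1 : 2/π * (D/K) * y * ((a * ρ ^ (-(1:ℝ)/D))^2/2)
            ≤ Real.sin ε' * (x^2 - ((ξ x).im)^2) :=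
          mul_le_mul hslow hq (by positivity) hsin0
        have hdiv : 2*c₁/R = 2*(c₁/R) := by ring
        have h2 : 2/π * (D/K) * y * ((a * ρ ^ (-(1:ℝ)/D))^2/2) = c₁/R := by
          linarith only [hkey, hdiv]
        have t2 : (1/2) * (2*(-x)*((ξ x).im)) ≤ Real.cos ε' * (2*(-x)*((ξ x).im)) :=
          mul_le_mul_of_nonneg_right hcos (by positivity)
        have t3 : -(ρ * ((ξ x)^(2*k+1)).im) ≥ -(1/4 * ((-x)*((ξ x).im))) := by
          have h3 : ρ * ((ξ x)^(2*k+1)).im ≤ ρ * |((ξ x)^(2*k+1)).im| :=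
            mul_le_mul_of_nonneg_left (le_abs_self _) hρ0.le
          linarith only [h3, hbadx]
        have t5 : 0 ≤ (-x)*((ξ x).im) := mul_nonneg hxpos hv0
        linarith only [h1, h2, t2, t3, t5]
end
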